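/- Let ℓ be a line in Euclidean 3-space, p ∈ ℓ a point, v a unit vector, k ∈ (0,1), and t₁, t₂, t₃ nonzero real numbers. For i = 1,2,3 let Sᵢ be the sphere with centre cᵢ = p + tᵢ • v and radius rᵢ = k·|tᵢ| (so the three spheres are inscribed in the cone with apex p, axis direction v and half-angle arcsin k). Then there are infinitely many lines through p that are tangent to all three spheres; in particular the set of lines that meet ℓ and are tangent to S₁, S₂ and S₃ is infinite. -/

import Mathlib

set_option maxHeartbeats 1000000


noncomputable section

/-- Euclidean 3-space. -/
abbrev E3 : Type := EuclideanSpace ℝ (Fin 3)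

/-- A line in `ℝ³`: a 1-dimensional affine subspace. -/
def IsLine (L : AffineSubspace ℝ E3) : Prop := Module.finrank ℝ L.direction = 1

/-- A plane in `ℝ³`: a 2-dimensional affine subspace. -/
def IsPlane (P : AffineSubspace ℝ E3) : Prop := Module.finrank ℝ P.direction = 2

/-- A line is tangent to the sphere with centre `c` and radius `r` if the distance
from `c` to the line equals `r`. -/
def Tangent (c : E3) (r : ℝ) (L : AffineSubspace ℝ E3) : Prop :=
  Metric.infDist c (L : Set E3) = r

/-- A line `L` meets a line `ℓ` if they have a common point. -/
def Meets (L ℓ : AffineSubspace ℝ E3) : Prop :=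
  ((L : Set E3) ∩ (ℓ : Set E3)).Nonempty

lemma tangent_aux (p v w : E3) (hv : ‖v‖ = 1) (hw : ‖w‖ = 1) (k : ℝ) (hk0 : 0 ≤ k)
    (hvw : (inner ℝ v w : ℝ)^2 = 1 - k^2) (t : ℝ) :
    Tangent (p + t • v) (k * |t|) (AffineSubspace.mk' p (ℝ ∙ w)) := by
  set a : ℝ := (inner ℝ v w : ℝ) with ha
  have hr : 0 ≤ k * |t| := mul_nonneg hk0 (abs_nonneg t)
  have key : ∀ s : ℝ, ‖t • v - s • w‖^2 = (s - t*a)^2 + t^2*k^2 := by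
    intro s
    have h := norm_sub_sq_real (t • v) (s • w)
    rw [norm_smul, norm_smul, real_inner_smul_left, real_inner_smul_right, hv, hw] at h
    simp only [Real.norm_eq_abs, mul_one] at h
    rw [h, ← ha, sq_abs, sq_abs]
    nlinarith [hvw]
  have hdiff : ∀ s : ℝ, (p + t • v) - (p + s • w) = t • v - s • w := by
    intro s; abel
  refine le_antisymm ?_ ?_
  · have hq : p + (t*a) • w ∈ (AffineSubspace.mk' p (ℝ ∙ w) : Set E3) := by
      have : (t*a) • w +ᵥ p ∈ AffineSubspace.mk' p (ℝ ∙ w) :=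
        AffineSubspace.vadd_mem_mk' p (Submodule.smul_mem _ _ (Submodule.mem_span_singleton_self w))
      simpa [vadd_eq_add, add_comm] using this
    have hle := Metric.infDist_le_dist_of_mem (x := p + t • v) hq
    have hd : dist (p + t • v) (p + (t*a) • w) = k * |t| := by
      rw [dist_eq_norm, hdiff]
      have h2 : ‖t • v - (t*a) • w‖^2 = (k*|t|)^2 := by
        rw [key, mul_pow, sq_abs]; ring
      calc ‖t • v - (t*a) • w‖ = Real.sqrt (‖t • v - (t*a) • w‖^2) :=
            (Real.sqrt_sq (norm_nonneg _)).symm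
        _ = Real.sqrt ((k*|t|)^2) := by rw [h2]
        _ = k * |t| := Real.sqrt_sq hr
    linarith [hle, hd.le, hd.ge]
  · by_contra hlt
    push_neg at hlt
    obtain ⟨y, hy, hdy⟩ := (Metric.infDist_lt_iff ⟨p, AffineSubspace.self_mem_mk' p _⟩).1 hlt
    have : y -ᵥ p ∈ (ℝ ∙ w) := AffineSubspace.mem_mk'.1 hy
    obtain ⟨s, hs⟩ := Submodule.mem_span_singleton.1 this
    have hs' : y - p = s • w := by simpa [vsub_eq_sub] using hs.symm
    have hy' : y = p + s • w := sub_eq_iff_eq_add'.1 hs'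
    rw [hy', dist_eq_norm, hdiff] at hdy
    have h2 := key s
    have hn := norm_nonneg (t • v - s • w)
    nlinarith [sq_nonneg (s - t*a), sq_abs t]


/-- Three spheres inscribed in a cone whose apex `p` lies on the line `ℓ`: there are
infinitely many lines through `p` tangent to all three spheres, and in particular the
set of lines meeting `ℓ` and tangent to the three spheres is infinite. -/
theorem spheres_inscribed_in_cone
    (ℓ : AffineSubspace ℝ E3) (hℓ : IsLine ℓ) (p : E3) (hpℓ : p ∈ ℓ)
    (v : E3) (hv : ‖v‖ = 1) (k : ℝ) (hk : k ∈ Set.Ioo (0:ℝ) 1)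
    (t₁ t₂ t₃ : ℝ) (ht₁ : t₁ ≠ 0) (ht₂ : t₂ ≠ 0) (ht₃ : t₃ ≠ 0) :
    {L : AffineSubspace ℝ E3 | IsLine L ∧ p ∈ L ∧
        Tangent (p + t₁ • v) (k * |t₁|) L ∧ Tangent (p + t₂ • v) (k * |t₂|) L ∧
        Tangent (p + t₃ • v) (k * |t₃|) L}.Infinite ∧
    {L : AffineSubspace ℝ E3 | IsLine L ∧ Meets L ℓ ∧
        Tangent (p + t₁ • v) (k * |t₁|) L ∧ Tangent (p + t₂ • v) (k * |t₂|) L ∧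
        Tangent (p + t₃ • v) (k * |t₃|) L}.Infinite := by
  obtain ⟨hk0, hk1⟩ := hk
  have hv0 : v ≠ 0 := by intro h; rw [h, norm_zero] at hv; norm_num at hv
  have h3 : Module.finrank ℝ E3 = 3 := finrank_euclideanSpace_fin
  set K := ((ℝ ∙ v) : Submodule ℝ E3)ᗮ with hK
  have hdimv : Module.finrank ℝ ((ℝ ∙ v) : Submodule ℝ E3) = 1 := finrank_span_singleton hv0
  have hdimK : Module.finrank ℝ K = 2 := by
    have := Submodule.finrank_add_finrank_orthogonal (K := ((ℝ ∙ v) : Submodule ℝ E3))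
    rw [hK]; omega
  set b := stdOrthonormalBasis ℝ K with hb
  set i0 : Fin (Module.finrank ℝ K) := ⟨0, by omega⟩ with hi0
  set i1 : Fin (Module.finrank ℝ K) := ⟨1, by omega⟩ with hi1
  set e₁ : E3 := (b i0 : E3) with he1
  set e₂ : E3 := (b i1 : E3) with he2
  have hn1 : ‖e₁‖ = 1 := by exact b.orthonormal.1 i0
  have hn2 : ‖e₂‖ = 1 := by exact b.orthonormal.1 i1
  have h11 : (inner ℝ e₁ e₁ : ℝ) = 1 := by rw [real_inner_self_eq_norm_sq, hn1]; norm_num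
  have h22 : (inner ℝ e₂ e₂ : ℝ) = 1 := by rw [real_inner_self_eq_norm_sq, hn2]; norm_num
  have h12 : (inner ℝ e₁ e₂ : ℝ) = 0 := by
    have hne : i0 ≠ i1 := by simp [hi0, hi1, Fin.ext_iff]
    rw [he1, he2, ← Submodule.coe_inner]
    exact b.orthonormal.2 hne
  have h21 : (inner ℝ e₂ e₁ : ℝ) = 0 := by rw [real_inner_comm]; exact h12
  have hmemK : ∀ i, ((b i : E3)) ∈ K := fun i => (b i).2
  have hve1 : (inner ℝ v e₁ : ℝ) = 0 := by
    exact (Submodule.mem_orthogonal (ℝ ∙ v) e₁).1 (hmemK i0) v (Submodule.mem_span_singleton_self v)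
  have hve2 : (inner ℝ v e₂ : ℝ) = 0 := by
    exact (Submodule.mem_orthogonal (ℝ ∙ v) e₂).1 (hmemK i1) v (Submodule.mem_span_singleton_self v)
  have h1v : (inner ℝ e₁ v : ℝ) = 0 := by rw [real_inner_comm]; exact hve1
  have h2v : (inner ℝ e₂ v : ℝ) = 0 := by rw [real_inner_comm]; exact hve2
  have hvv : (inner ℝ v v : ℝ) = 1 := by rw [real_inner_self_eq_norm_sq, hv]; norm_num
  set a : ℝ := Real.sqrt (1 - k^2) with ha_def
  have ha2 : a^2 = 1 - k^2 := Real.sq_sqrt (by nlinarith)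
  have ha0 : 0 < a := Real.sqrt_pos.2 (by nlinarith)
  set w : ℝ → E3 := fun θ => a • v + k • (Real.cos θ • e₁ + Real.sin θ • e₂) with hw_def
  have hvw : ∀ θ, (inner ℝ v (w θ) : ℝ) = a := by
    intro θ
    simp only [hw_def, inner_add_right, real_inner_smul_right, hvv, hve1, hve2]
    ring
  have h1w : ∀ θ, (inner ℝ e₁ (w θ) : ℝ) = k * Real.cos θ := by
    intro θ
    simp only [hw_def, inner_add_right, real_inner_smul_right, h1v, h11, h12]
    ring
  have hwnorm : ∀ θ, ‖w θ‖ = 1 := by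
    intro θ
    have hs := Real.sin_sq_add_cos_sq θ
    have hinner : (inner ℝ (w θ) (w θ) : ℝ) = 1 := by
      simp only [hw_def, inner_add_left, inner_add_right, real_inner_smul_left,
        real_inner_smul_right, hvv, hve1, hve2, h1v, h2v, h11, h22, h12, h21]
      nlinarith [ha2, hs]
    have := real_inner_self_eq_norm_sq (w θ)
    rw [hinner] at this
    have hn := norm_nonneg (w θ)
    nlinarith
  have hw0 : ∀ θ, w θ ≠ 0 := by
    intro θ h
    have := hwnorm θ
    rw [h, norm_zero] at this; norm_num at this
  set f : ℝ → AffineSubspace ℝ E3 := fun θ => AffineSubspace.mk' p (ℝ ∙ (w θ)) with hf_def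
  have hmem : ∀ θ, f θ ∈ {L : AffineSubspace ℝ E3 | IsLine L ∧ p ∈ L ∧
      Tangent (p + t₁ • v) (k * |t₁|) L ∧ Tangent (p + t₂ • v) (k * |t₂|) L ∧
      Tangent (p + t₃ • v) (k * |t₃|) L} := by
    intro θ
    have hvw2 : (inner ℝ v (w θ) : ℝ)^2 = 1 - k^2 := by rw [hvw θ]; exact ha2
    refine ⟨?_, AffineSubspace.self_mem_mk' p _, ?_, ?_, ?_⟩
    · show Module.finrank ℝ (AffineSubspace.mk' p (ℝ ∙ (w θ))).direction = 1
      rw [AffineSubspace.direction_mk']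
      exact finrank_span_singleton (hw0 θ)
    · exact tangent_aux p v (w θ) hv (hwnorm θ) k hk0.le hvw2 t₁
    · exact tangent_aux p v (w θ) hv (hwnorm θ) k hk0.le hvw2 t₂
    · exact tangent_aux p v (w θ) hv (hwnorm θ) k hk0.le hvw2 t₃
  have hinj : Set.InjOn f (Set.Ioo 0 (Real.pi/2)) := by
    intro θ₁ hθ₁ θ₂ hθ₂ hfe
    have hdir : (ℝ ∙ (w θ₁)) = (ℝ ∙ (w θ₂)) := by
      have := congrArg AffineSubspace.direction hfe
      simpa only [hf_def, AffineSubspace.direction_mk'] using this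
    have hmem2 : w θ₂ ∈ (ℝ ∙ (w θ₁)) := by
      rw [hdir]; exact Submodule.mem_span_singleton_self _
    obtain ⟨c, hc⟩ := Submodule.mem_span_singleton.1 hmem2
    have hca : c * a = a := by
      have h := congrArg (fun x => (inner ℝ v x : ℝ)) hc
      simp only [real_inner_smul_right, hvw] at h
      exact h
    have hc1 : c = 1 := mul_right_cancel₀ ha0.ne' (by rw [one_mul]; exact hca)
    rw [hc1, one_smul] at hc
    have hcos : k * Real.cos θ₁ = k * Real.cos θ₂ := by
      have h := congrArg (fun x => (inner ℝ e₁ x : ℝ)) hc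
      simp only [h1w] at h
      exact h
    have hcos' : Real.cos θ₁ = Real.cos θ₂ := mul_left_cancel₀ hk0.ne' hcos
    have hpi := Real.pi_pos
    exact Real.injOn_cos ⟨hθ₁.1.le, by linarith [hθ₁.2]⟩ ⟨hθ₂.1.le, by linarith [hθ₂.2]⟩ hcos'
  have hIooInf : (Set.Ioo (0:ℝ) (Real.pi/2)).Infinite :=
    Set.infinite_coe_iff.mp (Set.Ioo.infinite (by positivity))
  have hinf1 : {L : AffineSubspace ℝ E3 | IsLine L ∧ p ∈ L ∧
      Tangent (p + t₁ • v) (k * |t₁|) L ∧ Tangent (p + t₂ • v) (k * |t₂|) L ∧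
      Tangent (p + t₃ • v) (k * |t₃|) L}.Infinite :=
    Set.infinite_of_injOn_mapsTo hinj (fun θ _ => hmem θ) hIooInf
  refine ⟨hinf1, ?_⟩
  apply Set.Infinite.mono ?_ hinf1
  rintro L ⟨hL1, hL2, hL3⟩
  exact ⟨hL1, ⟨p, hL2, hpℓ⟩, hL3⟩
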